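/- The open-required directed door can simulate any gadget: for every gadget G with finite state set S, finite location set P, and traversal set T(G), there exists a system of open-required directed doors (one door D_{s,p} for each state–location pair, one door D_p for each location, and one door for each traversal of G, wired as in the construction) with external locations in bijection with P, and an injective map sending each state s of G to the global state in which exactly the doors D_{s,p} (p ∈ P) are open, such that a traversal between external locations is possible in the system if and only if the corresponding traversal is allowed in the transitive closure of G. -/

import Mathlib

/-- A 1-player gadget: a finite set of states, a finite set of locations,
and a set of traversals between state–location pairs. -/
structure Gadget where
  State : Type
  Loc : Type
  stateFin : Fintype State
  locFin : Fintype Loc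
  trav : (State × Loc) → (State × Loc) → Prop

open Classical in
/-- Update the state of one gadget instance in a global state. -/
noncomputable def updState {ι St : Type} (σg : ι → St) (i : ι) (s : St) : ι → St :=
  fun j => if j = i then s else σg j

/-- A system of copies of the gadget `G`: a finite collection of instances together with
symmetric connections (pairings of locations) along which the agent moves freely. -/
structure System (G : Gadget) where
  ι : Type
  instFin : Fintype ι
  conn : (ι × G.Loc) → (ι × G.Loc) → Prop
  conn_symm : ∀ x y, conn x y → conn y x

/-- A single move of the agent in a system: a traversal inside one instance
(changing only that instance's state), or a free move along a connection. -/
inductive SysStep (G : Gadget) (S : System G) :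
    ((S.ι → G.State) × (S.ι × G.Loc)) → ((S.ι → G.State) × (S.ι × G.Loc)) → Prop
  | trav {σg : S.ι → G.State} {i : S.ι} {a b : G.Loc} {s' : G.State} :
      G.trav (σg i, a) (s', b) →
      SysStep G S (σg, (i, a)) (updState σg i s', (i, b))
  | move {σg : S.ι → G.State} {x y : S.ι × G.Loc} :
      S.conn x y → SysStep G S (σg, x) (σg, y)

/-- `Simulates G' G` : there is a system of copies of `G'`, with external locations
identified (injectively) with the locations of `G` and an injective encoding of the
states of `G` as global states, whose reachability behavior between external locations
in encoded global states is exactly the transitive closure of `G`. -/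
def Simulates (G' G : Gadget) : Prop :=
  ∃ S : System G', ∃ ext : G.Loc → S.ι × G'.Loc, ∃ enc : G.State → (S.ι → G'.State),
    Function.Injective ext ∧ Function.Injective enc ∧
    ∀ s s' a b,
      Relation.ReflTransGen (SysStep G' S) (enc s, ext a) (enc s', ext b) ↔
      Relation.ReflTransGen G.trav (s, a) (s', b)

/-! ### Doors.  State `true` = open, `false` = closed.
A direction flag `true` means the corresponding tunnel is directed,
`false` that it is undirected. -/

/-- Locations of a door with an opening tunnel: entrance/exit of the opening (`O`),
traverse (`T`) and closing (`C`) tunnels. -/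
inductive DoorLoc | O0 | O1 | T0 | T1 | C0 | C1
deriving DecidableEq

instance : Fintype DoorLoc :=
  ⟨{DoorLoc.O0, DoorLoc.O1, DoorLoc.T0, DoorLoc.T1, DoorLoc.C0, DoorLoc.C1}, fun x => by cases x <;> decide⟩

/-- Traversals of a door with an opening tunnel; `dO`, `dT`, `dC` record whether the
opening, traverse, closing tunnels are directed. -/
def doorTrav (dO dT dC : Bool) : (Bool × DoorLoc) → (Bool × DoorLoc) → Prop := fun x y =>
  (x.2 = DoorLoc.O0 ∧ y = (true, DoorLoc.O1)) ∨
  (dO = false ∧ x.2 = DoorLoc.O1 ∧ y = (true, DoorLoc.O0)) ∨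
  (x.1 = true ∧ x.2 = DoorLoc.T0 ∧ y = (true, DoorLoc.T1)) ∨
  (dT = false ∧ x.1 = true ∧ x.2 = DoorLoc.T1 ∧ y = (true, DoorLoc.T0)) ∨
  (x.2 = DoorLoc.C0 ∧ y = (false, DoorLoc.C1)) ∨
  (dC = false ∧ x.2 = DoorLoc.C1 ∧ y = (false, DoorLoc.C0))

/-- The door with an opening tunnel (an open-required door). -/
def doorGadget (dO dT dC : Bool) : Gadget :=
  ⟨Bool, DoorLoc, inferInstance, inferInstance, doorTrav dO dT dC⟩

/-- Locations of an open-optional door: opening port `O` plus traverse and closing tunnels. -/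
inductive ODoorLoc | O | T0 | T1 | C0 | C1
deriving DecidableEq

instance : Fintype ODoorLoc :=
  ⟨{ODoorLoc.O, ODoorLoc.T0, ODoorLoc.T1, ODoorLoc.C0, ODoorLoc.C1}, fun x => by cases x <;> decide⟩

/-- Traversals of an open-optional door: a visit to the opening port `O` sets the state
to open; `dT`, `dC` record whether the traverse and closing tunnels are directed. -/
def openOptDoorTrav (dT dC : Bool) : (Bool × ODoorLoc) → (Bool × ODoorLoc) → Prop := fun x y =>
  (x.2 = ODoorLoc.O ∧ y = (true, ODoorLoc.O)) ∨
  (x.1 = true ∧ x.2 = ODoorLoc.T0 ∧ y = (true, ODoorLoc.T1)) ∨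
  (dT = false ∧ x.1 = true ∧ x.2 = ODoorLoc.T1 ∧ y = (true, ODoorLoc.T0)) ∨
  (x.2 = ODoorLoc.C0 ∧ y = (false, ODoorLoc.C1)) ∨
  (dC = false ∧ x.2 = ODoorLoc.C1 ∧ y = (false, ODoorLoc.C0))

/-- The open-optional door. -/
def openOptDoorGadget (dT dC : Bool) : Gadget :=
  ⟨Bool, ODoorLoc, inferInstance, inferInstance, openOptDoorTrav dT dC⟩

/-- A diode: a 1-state gadget with one always-traversable directed tunnel. -/
inductive DiodeLoc | inp | out
deriving DecidableEq

instance : Fintype DiodeLoc :=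
  ⟨{DiodeLoc.inp, DiodeLoc.out}, fun x => by cases x <;> decide⟩

def diode : Gadget :=
  ⟨Unit, DiodeLoc, inferInstance, inferInstance,
    fun x y => x.2 = DiodeLoc.inp ∧ y.2 = DiodeLoc.out⟩

/-- Locations of an open-required normal self-closing door. -/
inductive SCDLoc | O0 | O1 | T0 | T1
deriving DecidableEq

instance : Fintype SCDLoc :=
  ⟨{SCDLoc.O0, SCDLoc.O1, SCDLoc.T0, SCDLoc.T1}, fun x => by cases x <;> decide⟩

/-- Open-required normal self-closing door: opening tunnel `O` (always traversable, sets
the state to open), self-closing tunnel `T` (traversable exactly when open, sets closed). -/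
def nSCDTrav (dO dT : Bool) : (Bool × SCDLoc) → (Bool × SCDLoc) → Prop := fun x y =>
  (x.2 = SCDLoc.O0 ∧ y = (true, SCDLoc.O1)) ∨
  (dO = false ∧ x.2 = SCDLoc.O1 ∧ y = (true, SCDLoc.O0)) ∨
  (x.1 = true ∧ x.2 = SCDLoc.T0 ∧ y = (false, SCDLoc.T1)) ∨
  (dT = false ∧ x.1 = true ∧ x.2 = SCDLoc.T1 ∧ y = (false, SCDLoc.T0))

def nSCD (dO dT : Bool) : Gadget :=
  ⟨Bool, SCDLoc, inferInstance, inferInstance, nSCDTrav dO dT⟩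

/-- Locations of an open-optional normal self-closing door. -/
inductive OOSCDLoc | O | T0 | T1
deriving DecidableEq

instance : Fintype OOSCDLoc :=
  ⟨{OOSCDLoc.O, OOSCDLoc.T0, OOSCDLoc.T1}, fun x => by cases x <;> decide⟩

/-- Open-optional normal self-closing door: opening port `O` (visit sets the state to
open), self-closing tunnel `T` (traversable exactly when open, sets the state closed). -/
def ooSCDTrav (dT : Bool) : (Bool × OOSCDLoc) → (Bool × OOSCDLoc) → Prop := fun x y =>
  (x.2 = OOSCDLoc.O ∧ y = (true, OOSCDLoc.O)) ∨
  (x.1 = true ∧ x.2 = OOSCDLoc.T0 ∧ y = (false, OOSCDLoc.T1)) ∨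
  (dT = false ∧ x.1 = true ∧ x.2 = OOSCDLoc.T1 ∧ y = (false, OOSCDLoc.T0))

def ooSCD (dT : Bool) : Gadget :=
  ⟨Bool, OOSCDLoc, inferInstance, inferInstance, ooSCDTrav dT⟩

/-- Locations of a symmetric self-closing door. -/
inductive SymSCDLoc | A0 | A1 | B0 | B1
deriving DecidableEq

instance : Fintype SymSCDLoc :=
  ⟨{SymSCDLoc.A0, SymSCDLoc.A1, SymSCDLoc.B0, SymSCDLoc.B1}, fun x => by cases x <;> decide⟩

/-- Symmetric self-closing door: self-opening tunnel `A` (traversable exactly when closed,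
sets the state open), self-closing tunnel `B` (traversable exactly when open, sets closed). -/
def symSCDTrav (dA dB : Bool) : (Bool × SymSCDLoc) → (Bool × SymSCDLoc) → Prop := fun x y =>
  (x.1 = false ∧ x.2 = SymSCDLoc.A0 ∧ y = (true, SymSCDLoc.A1)) ∨
  (dA = false ∧ x.1 = false ∧ x.2 = SymSCDLoc.A1 ∧ y = (true, SymSCDLoc.A0)) ∨
  (x.1 = true ∧ x.2 = SymSCDLoc.B0 ∧ y = (false, SymSCDLoc.B1)) ∨
  (dB = false ∧ x.1 = true ∧ x.2 = SymSCDLoc.B1 ∧ y = (false, SymSCDLoc.B0))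

def symSCD (dA dB : Bool) : Gadget :=
  ⟨Bool, SymSCDLoc, inferInstance, inferInstance, symSCDTrav dA dB⟩

namespace DoorUniv

open DoorLoc

variable (G : Gadget)

local instance : Fintype G.State := G.stateFin
local instance : Fintype G.Loc := G.locFin

/-- locations extended with a dummy location -/
abbrev L' := Option G.Loc

/-- the traversals of `G`, as a type -/
def Tv := {x : (G.State × G.Loc) × (G.State × G.Loc) // G.trav x.1 x.2}

noncomputable local instance : Fintype (Tv G) := by
  classical
  have : Finite {x : (G.State × G.Loc) × (G.State × G.Loc) // G.trav x.1 x.2} :=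
    Subtype.finite
  exact @Fintype.ofFinite (Tv G) this

abbrev Idx := L' G ⊕ ((G.State × L' G) ⊕ (Tv G × Bool))

noncomputable local instance : Fintype (Idx G) := by
  classical
  exact Fintype.ofFinite _

abbrev ιL (r : L' G) : Idx G := Sum.inl r
abbrev ιV (v : G.State × L' G) : Idx G := Sum.inr (Sum.inl v)
abbrev ιF (f : Tv G × Bool) : Idx G := Sum.inr (Sum.inr f)

def nG : ℕ := Fintype.card (L' G)

lemma hn : 0 < nG G := Fintype.card_pos

lemma lastlt : nG G - 1 < nG G := Nat.sub_lt (hn G) one_pos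

noncomputable def eL : L' G ≃ Fin (nG G) := Fintype.equivFin _

noncomputable def idx (r : L' G) : ℕ := (eL G r : ℕ)

lemma idx_lt (r : L' G) : idx G r < nG G := (eL G r).isLt

noncomputable def rL (i : ℕ) (hi : i < nG G) : L' G := (eL G).symm ⟨i, hi⟩

lemma idx_rL (i : ℕ) (hi : i < nG G) : idx G (rL G i hi) = i := by
  simp [idx, rL]

lemma rL_idx (r : L' G) : rL G (idx G r) (idx_lt G r) = r := by
  simp [idx, rL]

lemma eq_rL_iff (r : L' G) (i : ℕ) (hi : i < nG G) : r = rL G i hi ↔ idx G r = i := by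
  constructor
  · rintro rfl; exact idx_rL G i hi
  · intro h
    subst h
    exact (rL_idx G r).symm

lemma rL_inj {i j : ℕ} {hi : i < nG G} {hj : j < nG G} (h : rL G i hi = rL G j hj) :
    i = j := by
  have := (eq_rL_iff G _ i hi).2 (idx_rL G i hi) -- dummy
  have h2 := (eq_rL_iff G (rL G i hi) j hj).1 h
  rwa [idx_rL] at h2

variable {G}

def srcS (t : Tv G) : G.State := t.1.1.1
def srcL (t : Tv G) : G.Loc := t.1.1.2
def tgtS (t : Tv G) : G.State := t.1.2.1
def tgtL (t : Tv G) : G.Loc := t.1.2.2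

lemma tv_trav (t : Tv G) : G.trav (srcS t, srcL t) (tgtS t, tgtL t) := t.2

variable (G)

/-- connection edges of the simulating system -/
inductive E : (Idx G × DoorLoc) → (Idx G × DoorLoc) → Prop
  | e1 (z : G.State) (p : G.Loc) :
      E (ιL G (some p), T0) (ιV G (z, some p), T0)
  | e2 (t : Tv G) :
      E (ιV G (srcS t, some (srcL t)), T1) (ιF G (t, false), O0)
  | e3 (t : Tv G) :
      E (ιF G (t, false), O1) (ιF G (t, true), O0)
  | e4 (t : Tv G) :
      E (ιF G (t, true), O1) (ιV G (srcS t, rL G 0 (hn G)), C0)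
  | e5 (z : G.State) (i : ℕ) (hi : i + 1 < nG G) :
      E (ιV G (z, rL G i (Nat.lt_of_succ_lt hi)), C1) (ιV G (z, rL G (i+1) hi), C0)
  | e6 (t : Tv G) :
      E (ιV G (srcS t, rL G (nG G - 1) (lastlt G)), C1) (ιF G (t, false), T0)
  | e7 (t : Tv G) :
      E (ιF G (t, false), T1) (ιF G (t, false), C0)
  | e8 (t : Tv G) :
      E (ιF G (t, false), C1) (ιV G (tgtS t, rL G 0 (hn G)), O0)
  | e9 (z : G.State) (i : ℕ) (hi : i + 1 < nG G) :
      E (ιV G (z, rL G i (Nat.lt_of_succ_lt hi)), O1) (ιV G (z, rL G (i+1) hi), O0)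
  | e10 (t : Tv G) :
      E (ιV G (tgtS t, rL G (nG G - 1) (lastlt G)), O1) (ιF G (t, true), T0)
  | e11 (t : Tv G) :
      E (ιF G (t, true), T1) (ιF G (t, true), C0)
  | e12 (t : Tv G) :
      E (ιF G (t, true), C1) (ιL G (some (tgtL t)), T0)

noncomputable def Sys : System (doorGadget true true true) where
  ι := Idx G
  instFin := inferInstance
  conn := fun x y => E G x y ∨ E G y x
  conn_symm := fun _ _ h => h.symm

open Classical in
/-- global states of the system, described by which V–doors and F–doors are open -/
noncomputable def mkσ (A : G.State × L' G → Prop) (B : Tv G × Bool → Prop) :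
    Idx G → Bool := fun i =>
  match i with
  | .inl _ => false
  | .inr (.inl v) => if A v then true else false
  | .inr (.inr f) => if B f then true else false

@[simp] lemma mkσ_L (A B) (r : L' G) : mkσ G A B (ιL G r) = false := rfl

@[simp] lemma mkσ_V_iff (A B) (v : G.State × L' G) : mkσ G A B (ιV G v) = true ↔ A v := by
  by_cases h : A v <;> simp [mkσ, h]

@[simp] lemma mkσ_F_iff (A B) (f : Tv G × Bool) : mkσ G A B (ιF G f) = true ↔ B f := by
  by_cases h : B f <;> simp [mkσ, h]

lemma mkσ_congr {A A' B B'} (hA : ∀ v, A v ↔ A' v) (hB : ∀ f, B f ↔ B' f) :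
    mkσ G A B = mkσ G A' B' := by
  funext i
  rcases i with r | v | f
  · rfl
  · simp only [mkσ]
    by_cases h : A v
    · rw [if_pos h, if_pos ((hA v).1 h)]
    · rw [if_neg h, if_neg (fun h' => h ((hA v).2 h'))]
  · simp only [mkσ]
    by_cases h : B f
    · rw [if_pos h, if_pos ((hB f).1 h)]
    · rw [if_neg h, if_neg (fun h' => h ((hB f).2 h'))]

noncomputable def enc (y : G.State) : Idx G → Bool :=
  mkσ G (fun v => v.1 = y) (fun _ => False)

noncomputable def S2c (t : Tv G) : Idx G → Bool :=
  mkσ G (fun v => v.1 = srcS t) (fun f => f = (t, false))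

noncomputable def S2e (t : Tv G) : Idx G → Bool :=
  mkσ G (fun v => v.1 = srcS t) (fun f => f.1 = t)

noncomputable def S3 (t : Tv G) (i : ℕ) : Idx G → Bool :=
  mkσ G (fun v => v.1 = srcS t ∧ i < idx G v.2) (fun f => f.1 = t)

noncomputable def S5pre (t : Tv G) : Idx G → Bool :=
  mkσ G (fun _ => False) (fun f => f = (t, true))

noncomputable def S5 (t : Tv G) (i : ℕ) : Idx G → Bool :=
  mkσ G (fun v => v.1 = tgtS t ∧ idx G v.2 ≤ i) (fun f => f = (t, true))

lemma enc_inj : Function.Injective (enc G) := by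
  intro y y' h
  by_contra hne
  have := congrFun h (ιV G (y, none))
  simp [enc, mkσ, hne] at this


@[simp] lemma mkσ_V_iff' (A B) (v : G.State × L' G) : mkσ G A B (ιV G v) = false ↔ ¬ A v := by
  by_cases h : A v <;> simp [mkσ, h]

@[simp] lemma mkσ_F_iff' (A B) (f : Tv G × Bool) : mkσ G A B (ιF G f) = false ↔ ¬ B f := by
  by_cases h : B f <;> simp [mkσ, h]

lemma updState_self {σ : Idx G → Bool} {i : Idx G} {b : Bool} (h : σ i = b) :
    updState σ i b = σ := by
  funext j
  unfold updState
  split_ifs with hj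
  · subst hj; exact h.symm
  · rfl

open Classical in
lemma upd_V (A B) (v0 : G.State × L' G) (b : Bool) :
    updState (mkσ G A B) (ιV G v0) b
      = mkσ G (fun w => if w = v0 then b = true else A w) B := by
  funext j
  unfold updState
  rcases j with r | v | f
  · simp [mkσ]
  · by_cases hv : v = v0
    · subst hv
      simp only [if_pos rfl, mkσ]
      cases b <;> simp
    · have : (ιV G v : Idx G) ≠ ιV G v0 := by simp [hv]
      simp only [if_neg this, mkσ, if_neg hv]
  · simp [mkσ]

open Classical in
lemma upd_F (A B) (f0 : Tv G × Bool) (b : Bool) :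
    updState (mkσ G A B) (ιF G f0) b
      = mkσ G A (fun g => if g = f0 then b = true else B g) := by
  funext j
  unfold updState
  rcases j with r | v | f
  · simp [mkσ]
  · simp [mkσ]
  · by_cases hf : f = f0
    · subst hf
      simp only [if_pos rfl, mkσ]
      cases b <;> simp
    · have : (ιF G f : Idx G) ≠ ιF G f0 := by simp [hf]
      simp only [if_neg this, mkσ, if_neg hf]

variable {G}

lemma stepE1 (y : G.State) (r : L' G) :
    updState (enc G y) (ιV G (y, r)) true = enc G y :=
  updState_self G (by simp [enc])

lemma stepE2 (t : Tv G) :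
    updState (enc G (srcS t)) (ιF G (t, false)) true = S2c G t := by
  rw [enc, upd_F, S2c]
  exact mkσ_congr G (fun v => Iff.rfl)
    (fun f => by by_cases h : f = (t, false) <;> simp [h])

lemma stepE3 (t : Tv G) :
    updState (S2c G t) (ιF G (t, true)) true = S2e G t := by
  rw [S2c, upd_F, S2e]
  refine mkσ_congr G (fun v => Iff.rfl) (fun f => ?_)
  by_cases h : f = (t, true)
  · simp [h]
  · rcases f with ⟨u, b⟩
    cases b <;> simp_all

lemma stepE4 (t : Tv G) :
    updState (S2e G t) (ιV G (srcS t, rL G 0 (hn G))) false = S3 G t 0 := by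
  rw [S2e, upd_V, S3]
  refine mkσ_congr G (fun w => ?_) (fun f => Iff.rfl)
  by_cases hw : w = (srcS t, rL G 0 (hn G))
  · rw [if_pos hw]
    subst hw
    simp [idx_rL]
  · rw [if_neg hw]
    constructor
    · intro hA
      refine ⟨hA, Nat.pos_of_ne_zero fun h0 => hw ?_⟩
      rw [Prod.ext_iff]
      exact ⟨hA, (eq_rL_iff G _ _ _).2 h0⟩
    · exact fun h => h.1

lemma stepE5 (t : Tv G) (i : ℕ) (hi : i + 1 < nG G) :
    updState (S3 G t i) (ιV G (srcS t, rL G (i+1) hi)) false = S3 G t (i+1) := by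
  rw [S3, upd_V, S3]
  refine mkσ_congr G (fun w => ?_) (fun f => Iff.rfl)
  by_cases hw : w = (srcS t, rL G (i+1) hi)
  · rw [if_pos hw]
    subst hw
    simp [idx_rL]
  · rw [if_neg hw]
    constructor
    · rintro ⟨h1, h2⟩
      refine ⟨h1, ?_⟩
      rcases Nat.lt_or_ge (i+1) (idx G w.2) with h | h
      · exact h
      · exfalso
        have : idx G w.2 = i + 1 := le_antisymm h h2
        exact hw (by rw [Prod.ext_iff]; exact ⟨h1, (eq_rL_iff G _ _ _).2 this⟩)
    · rintro ⟨h1, h2⟩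
      exact ⟨h1, Nat.lt_of_succ_lt h2⟩

lemma stepE6 (t : Tv G) (i : ℕ) :
    updState (S3 G t i) (ιF G (t, false)) true = S3 G t i :=
  updState_self G (by simp [S3])

lemma stepE7 (t : Tv G) :
    updState (S3 G t (nG G - 1)) (ιF G (t, false)) false = S5pre G t := by
  rw [S3, upd_F, S5pre]
  refine mkσ_congr G (fun w => ?_) (fun f => ?_)
  · constructor
    · rintro ⟨-, h2⟩
      have := idx_lt G w.2
      omega
    · exact False.elim
  · by_cases h : f = (t, false)
    · rw [if_pos h]
      subst h
      simp
    · rw [if_neg h]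
      rcases f with ⟨u, b⟩
      cases b <;> simp_all

lemma stepE8 (t : Tv G) :
    updState (S5pre G t) (ιV G (tgtS t, rL G 0 (hn G))) true = S5 G t 0 := by
  rw [S5pre, upd_V, S5]
  refine mkσ_congr G (fun w => ?_) (fun f => Iff.rfl)
  by_cases hw : w = (tgtS t, rL G 0 (hn G))
  · rw [if_pos hw]
    subst hw
    simp [idx_rL]
  · rw [if_neg hw]
    simp only [false_iff]
    rintro ⟨h1, h2⟩
    exact hw (by rw [Prod.ext_iff]; exact ⟨h1, (eq_rL_iff G _ _ _).2 (Nat.le_zero.1 h2)⟩)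

lemma stepE9 (t : Tv G) (i : ℕ) (hi : i + 1 < nG G) :
    updState (S5 G t i) (ιV G (tgtS t, rL G (i+1) hi)) true = S5 G t (i+1) := by
  rw [S5, upd_V, S5]
  refine mkσ_congr G (fun w => ?_) (fun f => Iff.rfl)
  by_cases hw : w = (tgtS t, rL G (i+1) hi)
  · rw [if_pos hw]
    subst hw
    simp [idx_rL]
  · rw [if_neg hw]
    constructor
    · rintro ⟨h1, h2⟩
      exact ⟨h1, Nat.le_succ_of_le h2⟩
    · rintro ⟨h1, h2⟩
      refine ⟨h1, ?_⟩
      rcases Nat.lt_or_ge (idx G w.2) (i+1) with h | h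
      · omega
      · exfalso
        have : idx G w.2 = i + 1 := le_antisymm h2 h
        exact hw (by rw [Prod.ext_iff]; exact ⟨h1, (eq_rL_iff G _ _ _).2 this⟩)

lemma stepE10 (t : Tv G) (i : ℕ) :
    updState (S5 G t i) (ιF G (t, true)) true = S5 G t i :=
  updState_self G (by simp [S5])

lemma stepE11 (t : Tv G) :
    updState (S5 G t (nG G - 1)) (ιF G (t, true)) false = enc G (tgtS t) := by
  rw [S5, upd_F, enc]
  refine mkσ_congr G (fun w => ?_) (fun f => ?_)
  · constructor
    · exact fun h => h.1
    · intro h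
      refine ⟨h, ?_⟩
      have := idx_lt G w.2
      omega
  · by_cases h : f = (t, true) <;> simp [h]

lemma stepE12 (y : G.State) (t : Tv G) (b : Bool) :
    updState (enc G y) (ιF G (t, b)) false = enc G y :=
  updState_self G (by simp [enc])

lemma door_trav_cases {x y : Bool × DoorLoc}
    (h : (doorGadget true true true).trav x y) :
    (x.2 = O0 ∧ y = (true, O1)) ∨ (x.1 = true ∧ x.2 = T0 ∧ y = (true, T1)) ∨
    (x.2 = C0 ∧ y = (false, C1)) := by
  simp only [doorGadget, doorTrav] at h
  rcases h with h | h | h | h | h | h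
  · exact Or.inl h
  · simp at h
  · exact Or.inr (Or.inl h)
  · simp at h
  · exact Or.inr (Or.inr h)
  · simp at h

lemma E_inv {x y : Idx G × DoorLoc} (h : E G x y) :
    (∃ z p, x = (ιL G (some p), T0) ∧ y = (ιV G (z, some p), T0)) ∨
    (∃ t, x = (ιV G (srcS t, some (srcL t)), T1) ∧ y = (ιF G (t, false), O0)) ∨
    (∃ t, x = (ιF G (t, false), O1) ∧ y = (ιF G (t, true), O0)) ∨
    (∃ t, x = (ιF G (t, true), O1) ∧ y = (ιV G (srcS t, rL G 0 (hn G)), C0)) ∨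
    (∃ z i, ∃ hi : i + 1 < nG G,
      x = (ιV G (z, rL G i (Nat.lt_of_succ_lt hi)), C1) ∧
      y = (ιV G (z, rL G (i+1) hi), C0)) ∨
    (∃ t, x = (ιV G (srcS t, rL G (nG G - 1) (lastlt G)), C1) ∧
      y = (ιF G (t, false), T0)) ∨
    (∃ t, x = (ιF G (t, false), T1) ∧ y = (ιF G (t, false), C0)) ∨
    (∃ t, x = (ιF G (t, false), C1) ∧ y = (ιV G (tgtS t, rL G 0 (hn G)), O0)) ∨
    (∃ z i, ∃ hi : i + 1 < nG G,
      x = (ιV G (z, rL G i (Nat.lt_of_succ_lt hi)), O1) ∧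
      y = (ιV G (z, rL G (i+1) hi), O0)) ∨
    (∃ t, x = (ιV G (tgtS t, rL G (nG G - 1) (lastlt G)), O1) ∧
      y = (ιF G (t, true), T0)) ∨
    (∃ t, x = (ιF G (t, true), T1) ∧ y = (ιF G (t, true), C0)) ∨
    (∃ t, x = (ιF G (t, true), C1) ∧ y = (ιL G (some (tgtL t)), T0)) := by
  cases h with
  | e1 z p => exact Or.inl ⟨z, p, rfl, rfl⟩
  | e2 t => exact Or.inr (Or.inl ⟨t, rfl, rfl⟩)
  | e3 t => exact Or.inr (Or.inr (Or.inl ⟨t, rfl, rfl⟩))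
  | e4 t => exact Or.inr (Or.inr (Or.inr (Or.inl ⟨t, rfl, rfl⟩)))
  | e5 z i hi => exact Or.inr (Or.inr (Or.inr (Or.inr (Or.inl ⟨z, i, hi, rfl, rfl⟩))))
  | e6 t => exact Or.inr (Or.inr (Or.inr (Or.inr (Or.inr (Or.inl ⟨t, rfl, rfl⟩)))))
  | e7 t => exact Or.inr (Or.inr (Or.inr (Or.inr (Or.inr (Or.inr (Or.inl ⟨t, rfl, rfl⟩))))))
  | e8 t => exact Or.inr (Or.inr (Or.inr (Or.inr (Or.inr (Or.inr (Or.inr (Or.inl ⟨t, rfl, rfl⟩)))))))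
  | e9 z i hi => exact Or.inr (Or.inr (Or.inr (Or.inr (Or.inr (Or.inr (Or.inr (Or.inr (Or.inl ⟨z, i, hi, rfl, rfl⟩))))))))
  | e10 t => exact Or.inr (Or.inr (Or.inr (Or.inr (Or.inr (Or.inr (Or.inr (Or.inr (Or.inr (Or.inl ⟨t, rfl, rfl⟩)))))))))
  | e11 t => exact Or.inr (Or.inr (Or.inr (Or.inr (Or.inr (Or.inr (Or.inr (Or.inr (Or.inr (Or.inr (Or.inl ⟨t, rfl, rfl⟩))))))))))
  | e12 t => exact Or.inr (Or.inr (Or.inr (Or.inr (Or.inr (Or.inr (Or.inr (Or.inr (Or.inr (Or.inr (Or.inr ⟨t, rfl, rfl⟩))))))))))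

/-- The invariant describing all configurations reachable from `(enc s, ext a)`. -/
inductive Inv (s : G.State) (a : G.Loc) :
    ((Idx G → Bool) × (Idx G × DoorLoc)) → Prop
  | idleExt {y : G.State} {p : G.Loc}
      (h : Relation.ReflTransGen G.trav (s, a) (y, p)) :
      Inv s a (enc G y, (ιL G (some p), T0))
  | idleV {y : G.State} {p : G.Loc} (z : G.State)
      (h : Relation.ReflTransGen G.trav (s, a) (y, p)) :
      Inv s a (enc G y, (ιV G (z, some p), T0))
  | idleF2 {y : G.State} (t : Tv G)
      (h : Relation.ReflTransGen G.trav (s, a) (y, tgtL t)) :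
      Inv s a (enc G y, (ιF G (t, true), C1))
  | ver2a {y : G.State} {p : G.Loc}
      (h : Relation.ReflTransGen G.trav (s, a) (y, p)) :
      Inv s a (enc G y, (ιV G (y, some p), T1))
  | ver2b (t : Tv G)
      (h : Relation.ReflTransGen G.trav (s, a) (srcS t, srcL t)) :
      Inv s a (enc G (srcS t), (ιF G (t, false), O0))
  | ver2c (t : Tv G)
      (h : Relation.ReflTransGen G.trav (s, a) (srcS t, srcL t)) :
      Inv s a (S2c G t, (ιF G (t, false), O1))
  | ver2d (t : Tv G)
      (h : Relation.ReflTransGen G.trav (s, a) (srcS t, srcL t)) :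
      Inv s a (S2c G t, (ιF G (t, true), O0))
  | ver2eB (t t' : Tv G)
      (h : Relation.ReflTransGen G.trav (s, a) (srcS t, srcL t))
      (hs : srcS t' = srcS t) :
      Inv s a (S2e G t, (ιF G (t', true), O1))
  | closeEntry (t : Tv G)
      (h : Relation.ReflTransGen G.trav (s, a) (srcS t, srcL t)) :
      Inv s a (S2e G t, (ιV G (srcS t, rL G 0 (hn G)), C0))
  | closing1 (t : Tv G) (i : ℕ) (hi : i < nG G)
      (h : Relation.ReflTransGen G.trav (s, a) (srcS t, srcL t)) :
      Inv s a (S3 G t i, (ιV G (srcS t, rL G i hi), C1))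
  | closing0 (t : Tv G) (i : ℕ) (hi : i + 1 < nG G)
      (h : Relation.ReflTransGen G.trav (s, a) (srcS t, srcL t)) :
      Inv s a (S3 G t i, (ιV G (srcS t, rL G (i+1) hi), C0))
  | cp1T0 (t t' : Tv G)
      (h : Relation.ReflTransGen G.trav (s, a) (srcS t, srcL t))
      (hs : srcS t' = srcS t) :
      Inv s a (S3 G t (nG G - 1), (ιF G (t', false), T0))
  | cp1T1 (t : Tv G)
      (h : Relation.ReflTransGen G.trav (s, a) (srcS t, srcL t)) :
      Inv s a (S3 G t (nG G - 1), (ιF G (t, false), T1))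
  | cp1C0 (t : Tv G)
      (h : Relation.ReflTransGen G.trav (s, a) (srcS t, srcL t)) :
      Inv s a (S3 G t (nG G - 1), (ιF G (t, false), C0))
  | openPre (t t' : Tv G)
      (h : Relation.ReflTransGen G.trav (s, a) (srcS t, srcL t))
      (ht : tgtS t' = tgtS t) :
      Inv s a (S5pre G t, (ιF G (t', false), C1))
  | openEntry (t : Tv G)
      (h : Relation.ReflTransGen G.trav (s, a) (srcS t, srcL t)) :
      Inv s a (S5pre G t, (ιV G (tgtS t, rL G 0 (hn G)), O0))
  | opening1 (t : Tv G) (i : ℕ) (hi : i < nG G)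
      (h : Relation.ReflTransGen G.trav (s, a) (srcS t, srcL t)) :
      Inv s a (S5 G t i, (ιV G (tgtS t, rL G i hi), O1))
  | opening0 (t : Tv G) (i : ℕ) (hi : i + 1 < nG G)
      (h : Relation.ReflTransGen G.trav (s, a) (srcS t, srcL t)) :
      Inv s a (S5 G t i, (ιV G (tgtS t, rL G (i+1) hi), O0))
  | cp2T0 (t t' : Tv G)
      (h : Relation.ReflTransGen G.trav (s, a) (srcS t, srcL t))
      (ht : tgtS t' = tgtS t) :
      Inv s a (S5 G t (nG G - 1), (ιF G (t', true), T0))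
  | cp2T1 (t : Tv G)
      (h : Relation.ReflTransGen G.trav (s, a) (srcS t, srcL t)) :
      Inv s a (S5 G t (nG G - 1), (ιF G (t, true), T1))
  | cp2C0 (t : Tv G)
      (h : Relation.ReflTransGen G.trav (s, a) (srcS t, srcL t)) :
      Inv s a (S5 G t (nG G - 1), (ιF G (t, true), C0))


lemma inv_step {s : G.State} {a : G.Loc} {c c'}
    (hI : Inv s a c) (st : SysStep _ (Sys G) c c') : Inv s a c' := by
  cases hI with
  | @idleExt y p h =>
    rcases st with ht | hc
    ·
      rcases door_trav_cases ht with ⟨h1, h2⟩ | ⟨h1, h2, h3⟩ | ⟨h1, h2⟩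
      · simp at h1
      · simp only [enc, mkσ_L] at h1; simp at h1
      · simp at h1
    ·
      have hc' : E G _ _ ∨ E G _ _ := hc
      rcases hc' with hE | hE
      · rcases E_inv hE with ⟨z1, p1, hA, hB⟩ | ⟨u, hA, hB⟩ | ⟨u, hA, hB⟩ | ⟨u, hA, hB⟩ |
          ⟨z1, j, hj, hA, hB⟩ | ⟨u, hA, hB⟩ | ⟨u, hA, hB⟩ | ⟨u, hA, hB⟩ |
          ⟨z1, j, hj, hA, hB⟩ | ⟨u, hA, hB⟩ | ⟨u, hA, hB⟩ | ⟨u, hA, hB⟩ <;>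
          subst hB <;>
          simp only [Prod.mk.injEq, Sum.inl.injEq, Sum.inr.injEq, Option.some.injEq,
            reduceCtorEq, and_true, true_and, and_false, false_and] at hA
        obtain rfl := hA
        exact Inv.idleV z1 h
      · rcases E_inv hE with ⟨z1, p1, hA, hB⟩ | ⟨u, hA, hB⟩ | ⟨u, hA, hB⟩ | ⟨u, hA, hB⟩ |
          ⟨z1, j, hj, hA, hB⟩ | ⟨u, hA, hB⟩ | ⟨u, hA, hB⟩ | ⟨u, hA, hB⟩ |
          ⟨z1, j, hj, hA, hB⟩ | ⟨u, hA, hB⟩ | ⟨u, hA, hB⟩ | ⟨u, hA, hB⟩ <;>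
          subst hA <;>
          simp only [Prod.mk.injEq, Sum.inl.injEq, Sum.inr.injEq, Option.some.injEq,
            reduceCtorEq, and_true, true_and, and_false, false_and] at hB
        exact Inv.idleF2 u (hB ▸ h)
  | @idleV y p z h =>
    rcases st with ht | hc
    ·
      rcases door_trav_cases ht with ⟨h1, h2⟩ | ⟨h1, h2, h3⟩ | ⟨h1, h2⟩
      · simp at h1
      · simp only [enc, mkσ_V_iff] at h1
        obtain rfl := h1
        obtain ⟨rfl, rfl⟩ := Prod.ext_iff.1 h3
        erw [stepE1]
        exact Inv.ver2a h
      · simp at h1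
    ·
      have hc' : E G _ _ ∨ E G _ _ := hc
      rcases hc' with hE | hE
      · rcases E_inv hE with ⟨z1, p1, hA, hB⟩ | ⟨u, hA, hB⟩ | ⟨u, hA, hB⟩ | ⟨u, hA, hB⟩ |
          ⟨z1, j, hj, hA, hB⟩ | ⟨u, hA, hB⟩ | ⟨u, hA, hB⟩ | ⟨u, hA, hB⟩ |
          ⟨z1, j, hj, hA, hB⟩ | ⟨u, hA, hB⟩ | ⟨u, hA, hB⟩ | ⟨u, hA, hB⟩ <;>
          subst hB <;>
          simp only [Prod.mk.injEq, Sum.inl.injEq, Sum.inr.injEq, Option.some.injEq,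
            reduceCtorEq, and_true, true_and, and_false, false_and] at hA
      · rcases E_inv hE with ⟨z1, p1, hA, hB⟩ | ⟨u, hA, hB⟩ | ⟨u, hA, hB⟩ | ⟨u, hA, hB⟩ |
          ⟨z1, j, hj, hA, hB⟩ | ⟨u, hA, hB⟩ | ⟨u, hA, hB⟩ | ⟨u, hA, hB⟩ |
          ⟨z1, j, hj, hA, hB⟩ | ⟨u, hA, hB⟩ | ⟨u, hA, hB⟩ | ⟨u, hA, hB⟩ <;>
          subst hA <;>
          simp only [Prod.mk.injEq, Sum.inl.injEq, Sum.inr.injEq, Option.some.injEq,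
            reduceCtorEq, and_true, true_and, and_false, false_and] at hB
        obtain ⟨rfl, rfl⟩ := hB
        exact Inv.idleExt h
  | @idleF2 y t h =>
    rcases st with ht | hc
    ·
      rcases door_trav_cases ht with ⟨h1, h2⟩ | ⟨h1, h2, h3⟩ | ⟨h1, h2⟩
      · simp at h1
      · simp at h2
      · simp at h1
    ·
      have hc' : E G _ _ ∨ E G _ _ := hc
      rcases hc' with hE | hE
      · rcases E_inv hE with ⟨z1, p1, hA, hB⟩ | ⟨u, hA, hB⟩ | ⟨u, hA, hB⟩ | ⟨u, hA, hB⟩ |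
          ⟨z1, j, hj, hA, hB⟩ | ⟨u, hA, hB⟩ | ⟨u, hA, hB⟩ | ⟨u, hA, hB⟩ |
          ⟨z1, j, hj, hA, hB⟩ | ⟨u, hA, hB⟩ | ⟨u, hA, hB⟩ | ⟨u, hA, hB⟩ <;>
          subst hB <;>
          simp only [Prod.mk.injEq, Sum.inl.injEq, Sum.inr.injEq, Option.some.injEq,
            reduceCtorEq, and_true, true_and, and_false, false_and] at hA
        obtain rfl := hA
        exact Inv.idleExt h
      · rcases E_inv hE with ⟨z1, p1, hA, hB⟩ | ⟨u, hA, hB⟩ | ⟨u, hA, hB⟩ | ⟨u, hA, hB⟩ |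
          ⟨z1, j, hj, hA, hB⟩ | ⟨u, hA, hB⟩ | ⟨u, hA, hB⟩ | ⟨u, hA, hB⟩ |
          ⟨z1, j, hj, hA, hB⟩ | ⟨u, hA, hB⟩ | ⟨u, hA, hB⟩ | ⟨u, hA, hB⟩ <;>
          subst hA <;>
          simp only [Prod.mk.injEq, Sum.inl.injEq, Sum.inr.injEq, Option.some.injEq,
            reduceCtorEq, and_true, true_and, and_false, false_and] at hB
  | @ver2a y p h =>
    rcases st with ht | hc
    ·
      rcases door_trav_cases ht with ⟨h1, h2⟩ | ⟨h1, h2, h3⟩ | ⟨h1, h2⟩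
      · simp at h1
      · simp at h2
      · simp at h1
    ·
      have hc' : E G _ _ ∨ E G _ _ := hc
      rcases hc' with hE | hE
      · rcases E_inv hE with ⟨z1, p1, hA, hB⟩ | ⟨u, hA, hB⟩ | ⟨u, hA, hB⟩ | ⟨u, hA, hB⟩ |
          ⟨z1, j, hj, hA, hB⟩ | ⟨u, hA, hB⟩ | ⟨u, hA, hB⟩ | ⟨u, hA, hB⟩ |
          ⟨z1, j, hj, hA, hB⟩ | ⟨u, hA, hB⟩ | ⟨u, hA, hB⟩ | ⟨u, hA, hB⟩ <;>
          subst hB <;>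
          simp only [Prod.mk.injEq, Sum.inl.injEq, Sum.inr.injEq, Option.some.injEq,
            reduceCtorEq, and_true, true_and, and_false, false_and] at hA
        obtain ⟨h3, h4⟩ := hA
        subst h3
        subst h4
        exact Inv.ver2b u h
      · rcases E_inv hE with ⟨z1, p1, hA, hB⟩ | ⟨u, hA, hB⟩ | ⟨u, hA, hB⟩ | ⟨u, hA, hB⟩ |
          ⟨z1, j, hj, hA, hB⟩ | ⟨u, hA, hB⟩ | ⟨u, hA, hB⟩ | ⟨u, hA, hB⟩ |
          ⟨z1, j, hj, hA, hB⟩ | ⟨u, hA, hB⟩ | ⟨u, hA, hB⟩ | ⟨u, hA, hB⟩ <;>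
          subst hA <;>
          simp only [Prod.mk.injEq, Sum.inl.injEq, Sum.inr.injEq, Option.some.injEq,
            reduceCtorEq, and_true, true_and, and_false, false_and] at hB
  | ver2b t h =>
    rcases st with ht | hc
    ·
      rcases door_trav_cases ht with ⟨h1, h2⟩ | ⟨h1, h2, h3⟩ | ⟨h1, h2⟩
      · obtain ⟨rfl, rfl⟩ := Prod.ext_iff.1 h2
        erw [stepE2]
        exact Inv.ver2c _ h
      · simp at h2
      · simp at h1
    ·
      have hc' : E G _ _ ∨ E G _ _ := hc
      rcases hc' with hE | hE
      · rcases E_inv hE with ⟨z1, p1, hA, hB⟩ | ⟨u, hA, hB⟩ | ⟨u, hA, hB⟩ | ⟨u, hA, hB⟩ |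
          ⟨z1, j, hj, hA, hB⟩ | ⟨u, hA, hB⟩ | ⟨u, hA, hB⟩ | ⟨u, hA, hB⟩ |
          ⟨z1, j, hj, hA, hB⟩ | ⟨u, hA, hB⟩ | ⟨u, hA, hB⟩ | ⟨u, hA, hB⟩ <;>
          subst hB <;>
          simp only [Prod.mk.injEq, Sum.inl.injEq, Sum.inr.injEq, Option.some.injEq,
            reduceCtorEq, and_true, true_and, and_false, false_and] at hA
      · rcases E_inv hE with ⟨z1, p1, hA, hB⟩ | ⟨u, hA, hB⟩ | ⟨u, hA, hB⟩ | ⟨u, hA, hB⟩ |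
          ⟨z1, j, hj, hA, hB⟩ | ⟨u, hA, hB⟩ | ⟨u, hA, hB⟩ | ⟨u, hA, hB⟩ |
          ⟨z1, j, hj, hA, hB⟩ | ⟨u, hA, hB⟩ | ⟨u, hA, hB⟩ | ⟨u, hA, hB⟩ <;>
          subst hA <;>
          simp only [Prod.mk.injEq, Sum.inl.injEq, Sum.inr.injEq, Option.some.injEq,
            reduceCtorEq, and_true, true_and, and_false, false_and] at hB
        obtain rfl := hB
        exact Inv.ver2a h
  | ver2c t h =>
    rcases st with ht | hc
    ·
      rcases door_trav_cases ht with ⟨h1, h2⟩ | ⟨h1, h2, h3⟩ | ⟨h1, h2⟩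
      · simp at h1
      · simp at h2
      · simp at h1
    ·
      have hc' : E G _ _ ∨ E G _ _ := hc
      rcases hc' with hE | hE
      · rcases E_inv hE with ⟨z1, p1, hA, hB⟩ | ⟨u, hA, hB⟩ | ⟨u, hA, hB⟩ | ⟨u, hA, hB⟩ |
          ⟨z1, j, hj, hA, hB⟩ | ⟨u, hA, hB⟩ | ⟨u, hA, hB⟩ | ⟨u, hA, hB⟩ |
          ⟨z1, j, hj, hA, hB⟩ | ⟨u, hA, hB⟩ | ⟨u, hA, hB⟩ | ⟨u, hA, hB⟩ <;>
          subst hB <;>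
          simp only [Prod.mk.injEq, Sum.inl.injEq, Sum.inr.injEq, Option.some.injEq,
            reduceCtorEq, and_true, true_and, and_false, false_and] at hA
        obtain rfl := hA
        exact Inv.ver2d _ h
      · rcases E_inv hE with ⟨z1, p1, hA, hB⟩ | ⟨u, hA, hB⟩ | ⟨u, hA, hB⟩ | ⟨u, hA, hB⟩ |
          ⟨z1, j, hj, hA, hB⟩ | ⟨u, hA, hB⟩ | ⟨u, hA, hB⟩ | ⟨u, hA, hB⟩ |
          ⟨z1, j, hj, hA, hB⟩ | ⟨u, hA, hB⟩ | ⟨u, hA, hB⟩ | ⟨u, hA, hB⟩ <;>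
          subst hA <;>
          simp only [Prod.mk.injEq, Sum.inl.injEq, Sum.inr.injEq, Option.some.injEq,
            reduceCtorEq, and_true, true_and, and_false, false_and] at hB
  | ver2d t h =>
    rcases st with ht | hc
    ·
      rcases door_trav_cases ht with ⟨h1, h2⟩ | ⟨h1, h2, h3⟩ | ⟨h1, h2⟩
      · obtain ⟨rfl, rfl⟩ := Prod.ext_iff.1 h2
        erw [stepE3]
        exact Inv.ver2eB t t h rfl
      · simp at h2
      · simp at h1
    ·
      have hc' : E G _ _ ∨ E G _ _ := hc
      rcases hc' with hE | hE
      · rcases E_inv hE with ⟨z1, p1, hA, hB⟩ | ⟨u, hA, hB⟩ | ⟨u, hA, hB⟩ | ⟨u, hA, hB⟩ |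
          ⟨z1, j, hj, hA, hB⟩ | ⟨u, hA, hB⟩ | ⟨u, hA, hB⟩ | ⟨u, hA, hB⟩ |
          ⟨z1, j, hj, hA, hB⟩ | ⟨u, hA, hB⟩ | ⟨u, hA, hB⟩ | ⟨u, hA, hB⟩ <;>
          subst hB <;>
          simp only [Prod.mk.injEq, Sum.inl.injEq, Sum.inr.injEq, Option.some.injEq,
            reduceCtorEq, and_true, true_and, and_false, false_and] at hA
      · rcases E_inv hE with ⟨z1, p1, hA, hB⟩ | ⟨u, hA, hB⟩ | ⟨u, hA, hB⟩ | ⟨u, hA, hB⟩ |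
          ⟨z1, j, hj, hA, hB⟩ | ⟨u, hA, hB⟩ | ⟨u, hA, hB⟩ | ⟨u, hA, hB⟩ |
          ⟨z1, j, hj, hA, hB⟩ | ⟨u, hA, hB⟩ | ⟨u, hA, hB⟩ | ⟨u, hA, hB⟩ <;>
          subst hA <;>
          simp only [Prod.mk.injEq, Sum.inl.injEq, Sum.inr.injEq, Option.some.injEq,
            reduceCtorEq, and_true, true_and, and_false, false_and] at hB
        obtain rfl := hB
        exact Inv.ver2c _ h
  | ver2eB t t2 h hs =>
    rcases st with ht | hc
    ·
      rcases door_trav_cases ht with ⟨h1, h2⟩ | ⟨h1, h2, h3⟩ | ⟨h1, h2⟩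
      · simp at h1
      · simp at h2
      · simp at h1
    ·
      have hc' : E G _ _ ∨ E G _ _ := hc
      rcases hc' with hE | hE
      · rcases E_inv hE with ⟨z1, p1, hA, hB⟩ | ⟨u, hA, hB⟩ | ⟨u, hA, hB⟩ | ⟨u, hA, hB⟩ |
          ⟨z1, j, hj, hA, hB⟩ | ⟨u, hA, hB⟩ | ⟨u, hA, hB⟩ | ⟨u, hA, hB⟩ |
          ⟨z1, j, hj, hA, hB⟩ | ⟨u, hA, hB⟩ | ⟨u, hA, hB⟩ | ⟨u, hA, hB⟩ <;>
          subst hB <;>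
          simp only [Prod.mk.injEq, Sum.inl.injEq, Sum.inr.injEq, Option.some.injEq,
            reduceCtorEq, and_true, true_and, and_false, false_and] at hA
        obtain rfl := hA
        rw [hs]
        exact Inv.closeEntry t h
      · rcases E_inv hE with ⟨z1, p1, hA, hB⟩ | ⟨u, hA, hB⟩ | ⟨u, hA, hB⟩ | ⟨u, hA, hB⟩ |
          ⟨z1, j, hj, hA, hB⟩ | ⟨u, hA, hB⟩ | ⟨u, hA, hB⟩ | ⟨u, hA, hB⟩ |
          ⟨z1, j, hj, hA, hB⟩ | ⟨u, hA, hB⟩ | ⟨u, hA, hB⟩ | ⟨u, hA, hB⟩ <;>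
          subst hA <;>
          simp only [Prod.mk.injEq, Sum.inl.injEq, Sum.inr.injEq, Option.some.injEq,
            reduceCtorEq, and_true, true_and, and_false, false_and] at hB
  | closeEntry t h =>
    rcases st with ht | hc
    ·
      rcases door_trav_cases ht with ⟨h1, h2⟩ | ⟨h1, h2, h3⟩ | ⟨h1, h2⟩
      · simp at h1
      · simp at h2
      · obtain ⟨rfl, rfl⟩ := Prod.ext_iff.1 h2
        erw [stepE4]
        exact Inv.closing1 t 0 (hn G) h
    ·
      have hc' : E G _ _ ∨ E G _ _ := hc
      rcases hc' with hE | hE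
      · rcases E_inv hE with ⟨z1, p1, hA, hB⟩ | ⟨u, hA, hB⟩ | ⟨u, hA, hB⟩ | ⟨u, hA, hB⟩ |
          ⟨z1, j, hj, hA, hB⟩ | ⟨u, hA, hB⟩ | ⟨u, hA, hB⟩ | ⟨u, hA, hB⟩ |
          ⟨z1, j, hj, hA, hB⟩ | ⟨u, hA, hB⟩ | ⟨u, hA, hB⟩ | ⟨u, hA, hB⟩ <;>
          subst hB <;>
          simp only [Prod.mk.injEq, Sum.inl.injEq, Sum.inr.injEq, Option.some.injEq,
            reduceCtorEq, and_true, true_and, and_false, false_and] at hA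
      · rcases E_inv hE with ⟨z1, p1, hA, hB⟩ | ⟨u, hA, hB⟩ | ⟨u, hA, hB⟩ | ⟨u, hA, hB⟩ |
          ⟨z1, j, hj, hA, hB⟩ | ⟨u, hA, hB⟩ | ⟨u, hA, hB⟩ | ⟨u, hA, hB⟩ |
          ⟨z1, j, hj, hA, hB⟩ | ⟨u, hA, hB⟩ | ⟨u, hA, hB⟩ | ⟨u, hA, hB⟩ <;>
          subst hA <;>
          simp only [Prod.mk.injEq, Sum.inl.injEq, Sum.inr.injEq, Option.some.injEq,
            reduceCtorEq, and_true, true_and, and_false, false_and] at hB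
        exact Inv.ver2eB t u h hB.symm
        obtain ⟨h3, h4⟩ := hB
        exact absurd (rL_inj G h4) (by omega)
  | closing1 t i hi h =>
    rcases st with ht | hc
    ·
      rcases door_trav_cases ht with ⟨h1, h2⟩ | ⟨h1, h2, h3⟩ | ⟨h1, h2⟩
      · simp at h1
      · simp at h2
      · simp at h1
    ·
      have hc' : E G _ _ ∨ E G _ _ := hc
      rcases hc' with hE | hE
      · rcases E_inv hE with ⟨z1, p1, hA, hB⟩ | ⟨u, hA, hB⟩ | ⟨u, hA, hB⟩ | ⟨u, hA, hB⟩ |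
          ⟨z1, j, hj, hA, hB⟩ | ⟨u, hA, hB⟩ | ⟨u, hA, hB⟩ | ⟨u, hA, hB⟩ |
          ⟨z1, j, hj, hA, hB⟩ | ⟨u, hA, hB⟩ | ⟨u, hA, hB⟩ | ⟨u, hA, hB⟩ <;>
          subst hB <;>
          simp only [Prod.mk.injEq, Sum.inl.injEq, Sum.inr.injEq, Option.some.injEq,
            reduceCtorEq, and_true, true_and, and_false, false_and] at hA
        obtain ⟨h3, h4⟩ := hA
        obtain rfl := h3
        obtain rfl := rL_inj G h4
        exact Inv.closing0 t _ hj h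
        obtain ⟨h3, h4⟩ := hA
        obtain rfl := rL_inj G h4
        exact Inv.cp1T0 t u h h3.symm
      · rcases E_inv hE with ⟨z1, p1, hA, hB⟩ | ⟨u, hA, hB⟩ | ⟨u, hA, hB⟩ | ⟨u, hA, hB⟩ |
          ⟨z1, j, hj, hA, hB⟩ | ⟨u, hA, hB⟩ | ⟨u, hA, hB⟩ | ⟨u, hA, hB⟩ |
          ⟨z1, j, hj, hA, hB⟩ | ⟨u, hA, hB⟩ | ⟨u, hA, hB⟩ | ⟨u, hA, hB⟩ <;>
          subst hA <;>
          simp only [Prod.mk.injEq, Sum.inl.injEq, Sum.inr.injEq, Option.some.injEq,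
            reduceCtorEq, and_true, true_and, and_false, false_and] at hB
  | closing0 t i hi h =>
    rcases st with ht | hc
    ·
      rcases door_trav_cases ht with ⟨h1, h2⟩ | ⟨h1, h2, h3⟩ | ⟨h1, h2⟩
      · simp at h1
      · simp at h2
      · obtain ⟨rfl, rfl⟩ := Prod.ext_iff.1 h2
        erw [stepE5]
        exact Inv.closing1 t (i+1) hi h
    ·
      have hc' : E G _ _ ∨ E G _ _ := hc
      rcases hc' with hE | hE
      · rcases E_inv hE with ⟨z1, p1, hA, hB⟩ | ⟨u, hA, hB⟩ | ⟨u, hA, hB⟩ | ⟨u, hA, hB⟩ |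
          ⟨z1, j, hj, hA, hB⟩ | ⟨u, hA, hB⟩ | ⟨u, hA, hB⟩ | ⟨u, hA, hB⟩ |
          ⟨z1, j, hj, hA, hB⟩ | ⟨u, hA, hB⟩ | ⟨u, hA, hB⟩ | ⟨u, hA, hB⟩ <;>
          subst hB <;>
          simp only [Prod.mk.injEq, Sum.inl.injEq, Sum.inr.injEq, Option.some.injEq,
            reduceCtorEq, and_true, true_and, and_false, false_and] at hA
      · rcases E_inv hE with ⟨z1, p1, hA, hB⟩ | ⟨u, hA, hB⟩ | ⟨u, hA, hB⟩ | ⟨u, hA, hB⟩ |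
          ⟨z1, j, hj, hA, hB⟩ | ⟨u, hA, hB⟩ | ⟨u, hA, hB⟩ | ⟨u, hA, hB⟩ |
          ⟨z1, j, hj, hA, hB⟩ | ⟨u, hA, hB⟩ | ⟨u, hA, hB⟩ | ⟨u, hA, hB⟩ <;>
          subst hA <;>
          simp only [Prod.mk.injEq, Sum.inl.injEq, Sum.inr.injEq, Option.some.injEq,
            reduceCtorEq, and_true, true_and, and_false, false_and] at hB
        obtain ⟨h3, h4⟩ := hB
        exact absurd (rL_inj G h4) (by omega)
        obtain ⟨h3, h4⟩ := hB
        obtain rfl := h3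
        obtain rfl := Nat.succ_injective (rL_inj G h4)
        exact Inv.closing1 t _ (Nat.lt_of_succ_lt hj) h
  | cp1T0 t t2 h hs =>
    rcases st with ht | hc
    ·
      rcases door_trav_cases ht with ⟨h1, h2⟩ | ⟨h1, h2, h3⟩ | ⟨h1, h2⟩
      · simp at h1
      · simp only [S3, mkσ_F_iff] at h1
        obtain rfl := h1
        obtain ⟨rfl, rfl⟩ := Prod.ext_iff.1 h3
        erw [stepE6]
        exact Inv.cp1T1 _ h
      · simp at h1
    ·
      have hc' : E G _ _ ∨ E G _ _ := hc
      rcases hc' with hE | hE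
      · rcases E_inv hE with ⟨z1, p1, hA, hB⟩ | ⟨u, hA, hB⟩ | ⟨u, hA, hB⟩ | ⟨u, hA, hB⟩ |
          ⟨z1, j, hj, hA, hB⟩ | ⟨u, hA, hB⟩ | ⟨u, hA, hB⟩ | ⟨u, hA, hB⟩ |
          ⟨z1, j, hj, hA, hB⟩ | ⟨u, hA, hB⟩ | ⟨u, hA, hB⟩ | ⟨u, hA, hB⟩ <;>
          subst hB <;>
          simp only [Prod.mk.injEq, Sum.inl.injEq, Sum.inr.injEq, Option.some.injEq,
            reduceCtorEq, and_true, true_and, and_false, false_and] at hA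
      · rcases E_inv hE with ⟨z1, p1, hA, hB⟩ | ⟨u, hA, hB⟩ | ⟨u, hA, hB⟩ | ⟨u, hA, hB⟩ |
          ⟨z1, j, hj, hA, hB⟩ | ⟨u, hA, hB⟩ | ⟨u, hA, hB⟩ | ⟨u, hA, hB⟩ |
          ⟨z1, j, hj, hA, hB⟩ | ⟨u, hA, hB⟩ | ⟨u, hA, hB⟩ | ⟨u, hA, hB⟩ <;>
          subst hA <;>
          simp only [Prod.mk.injEq, Sum.inl.injEq, Sum.inr.injEq, Option.some.injEq,
            reduceCtorEq, and_true, true_and, and_false, false_and] at hB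
        obtain rfl := hB
        rw [hs]
        exact Inv.closing1 t (nG G - 1) (lastlt G) h
  | cp1T1 t h =>
    rcases st with ht | hc
    ·
      rcases door_trav_cases ht with ⟨h1, h2⟩ | ⟨h1, h2, h3⟩ | ⟨h1, h2⟩
      · simp at h1
      · simp at h2
      · simp at h1
    ·
      have hc' : E G _ _ ∨ E G _ _ := hc
      rcases hc' with hE | hE
      · rcases E_inv hE with ⟨z1, p1, hA, hB⟩ | ⟨u, hA, hB⟩ | ⟨u, hA, hB⟩ | ⟨u, hA, hB⟩ |
          ⟨z1, j, hj, hA, hB⟩ | ⟨u, hA, hB⟩ | ⟨u, hA, hB⟩ | ⟨u, hA, hB⟩ |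
          ⟨z1, j, hj, hA, hB⟩ | ⟨u, hA, hB⟩ | ⟨u, hA, hB⟩ | ⟨u, hA, hB⟩ <;>
          subst hB <;>
          simp only [Prod.mk.injEq, Sum.inl.injEq, Sum.inr.injEq, Option.some.injEq,
            reduceCtorEq, and_true, true_and, and_false, false_and] at hA
        obtain rfl := hA
        exact Inv.cp1C0 _ h
      · rcases E_inv hE with ⟨z1, p1, hA, hB⟩ | ⟨u, hA, hB⟩ | ⟨u, hA, hB⟩ | ⟨u, hA, hB⟩ |
          ⟨z1, j, hj, hA, hB⟩ | ⟨u, hA, hB⟩ | ⟨u, hA, hB⟩ | ⟨u, hA, hB⟩ |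
          ⟨z1, j, hj, hA, hB⟩ | ⟨u, hA, hB⟩ | ⟨u, hA, hB⟩ | ⟨u, hA, hB⟩ <;>
          subst hA <;>
          simp only [Prod.mk.injEq, Sum.inl.injEq, Sum.inr.injEq, Option.some.injEq,
            reduceCtorEq, and_true, true_and, and_false, false_and] at hB
  | cp1C0 t h =>
    rcases st with ht | hc
    ·
      rcases door_trav_cases ht with ⟨h1, h2⟩ | ⟨h1, h2, h3⟩ | ⟨h1, h2⟩
      · simp at h1
      · simp at h2
      · obtain ⟨rfl, rfl⟩ := Prod.ext_iff.1 h2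
        erw [stepE7]
        exact Inv.openPre t t h rfl
    ·
      have hc' : E G _ _ ∨ E G _ _ := hc
      rcases hc' with hE | hE
      · rcases E_inv hE with ⟨z1, p1, hA, hB⟩ | ⟨u, hA, hB⟩ | ⟨u, hA, hB⟩ | ⟨u, hA, hB⟩ |
          ⟨z1, j, hj, hA, hB⟩ | ⟨u, hA, hB⟩ | ⟨u, hA, hB⟩ | ⟨u, hA, hB⟩ |
          ⟨z1, j, hj, hA, hB⟩ | ⟨u, hA, hB⟩ | ⟨u, hA, hB⟩ | ⟨u, hA, hB⟩ <;>
          subst hB <;>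
          simp only [Prod.mk.injEq, Sum.inl.injEq, Sum.inr.injEq, Option.some.injEq,
            reduceCtorEq, and_true, true_and, and_false, false_and] at hA
      · rcases E_inv hE with ⟨z1, p1, hA, hB⟩ | ⟨u, hA, hB⟩ | ⟨u, hA, hB⟩ | ⟨u, hA, hB⟩ |
          ⟨z1, j, hj, hA, hB⟩ | ⟨u, hA, hB⟩ | ⟨u, hA, hB⟩ | ⟨u, hA, hB⟩ |
          ⟨z1, j, hj, hA, hB⟩ | ⟨u, hA, hB⟩ | ⟨u, hA, hB⟩ | ⟨u, hA, hB⟩ <;>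
          subst hA <;>
          simp only [Prod.mk.injEq, Sum.inl.injEq, Sum.inr.injEq, Option.some.injEq,
            reduceCtorEq, and_true, true_and, and_false, false_and] at hB
        obtain rfl := hB
        exact Inv.cp1T1 _ h
  | openPre t t2 h ht2 =>
    rcases st with ht | hc
    ·
      rcases door_trav_cases ht with ⟨h1, h2⟩ | ⟨h1, h2, h3⟩ | ⟨h1, h2⟩
      · simp at h1
      · simp at h2
      · simp at h1
    ·
      have hc' : E G _ _ ∨ E G _ _ := hc
      rcases hc' with hE | hE
      · rcases E_inv hE with ⟨z1, p1, hA, hB⟩ | ⟨u, hA, hB⟩ | ⟨u, hA, hB⟩ | ⟨u, hA, hB⟩ |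
          ⟨z1, j, hj, hA, hB⟩ | ⟨u, hA, hB⟩ | ⟨u, hA, hB⟩ | ⟨u, hA, hB⟩ |
          ⟨z1, j, hj, hA, hB⟩ | ⟨u, hA, hB⟩ | ⟨u, hA, hB⟩ | ⟨u, hA, hB⟩ <;>
          subst hB <;>
          simp only [Prod.mk.injEq, Sum.inl.injEq, Sum.inr.injEq, Option.some.injEq,
            reduceCtorEq, and_true, true_and, and_false, false_and] at hA
        obtain rfl := hA
        rw [ht2]
        exact Inv.openEntry t h
      · rcases E_inv hE with ⟨z1, p1, hA, hB⟩ | ⟨u, hA, hB⟩ | ⟨u, hA, hB⟩ | ⟨u, hA, hB⟩ |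
          ⟨z1, j, hj, hA, hB⟩ | ⟨u, hA, hB⟩ | ⟨u, hA, hB⟩ | ⟨u, hA, hB⟩ |
          ⟨z1, j, hj, hA, hB⟩ | ⟨u, hA, hB⟩ | ⟨u, hA, hB⟩ | ⟨u, hA, hB⟩ <;>
          subst hA <;>
          simp only [Prod.mk.injEq, Sum.inl.injEq, Sum.inr.injEq, Option.some.injEq,
            reduceCtorEq, and_true, true_and, and_false, false_and] at hB
  | openEntry t h =>
    rcases st with ht | hc
    ·
      rcases door_trav_cases ht with ⟨h1, h2⟩ | ⟨h1, h2, h3⟩ | ⟨h1, h2⟩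
      · obtain ⟨rfl, rfl⟩ := Prod.ext_iff.1 h2
        erw [stepE8]
        exact Inv.opening1 t 0 (hn G) h
      · simp at h2
      · simp at h1
    ·
      have hc' : E G _ _ ∨ E G _ _ := hc
      rcases hc' with hE | hE
      · rcases E_inv hE with ⟨z1, p1, hA, hB⟩ | ⟨u, hA, hB⟩ | ⟨u, hA, hB⟩ | ⟨u, hA, hB⟩ |
          ⟨z1, j, hj, hA, hB⟩ | ⟨u, hA, hB⟩ | ⟨u, hA, hB⟩ | ⟨u, hA, hB⟩ |
          ⟨z1, j, hj, hA, hB⟩ | ⟨u, hA, hB⟩ | ⟨u, hA, hB⟩ | ⟨u, hA, hB⟩ <;>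
          subst hB <;>
          simp only [Prod.mk.injEq, Sum.inl.injEq, Sum.inr.injEq, Option.some.injEq,
            reduceCtorEq, and_true, true_and, and_false, false_and] at hA
      · rcases E_inv hE with ⟨z1, p1, hA, hB⟩ | ⟨u, hA, hB⟩ | ⟨u, hA, hB⟩ | ⟨u, hA, hB⟩ |
          ⟨z1, j, hj, hA, hB⟩ | ⟨u, hA, hB⟩ | ⟨u, hA, hB⟩ | ⟨u, hA, hB⟩ |
          ⟨z1, j, hj, hA, hB⟩ | ⟨u, hA, hB⟩ | ⟨u, hA, hB⟩ | ⟨u, hA, hB⟩ <;>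
          subst hA <;>
          simp only [Prod.mk.injEq, Sum.inl.injEq, Sum.inr.injEq, Option.some.injEq,
            reduceCtorEq, and_true, true_and, and_false, false_and] at hB
        exact Inv.openPre t u h hB.symm
        obtain ⟨h3, h4⟩ := hB
        exact absurd (rL_inj G h4) (by omega)
  | opening1 t i hi h =>
    rcases st with ht | hc
    ·
      rcases door_trav_cases ht with ⟨h1, h2⟩ | ⟨h1, h2, h3⟩ | ⟨h1, h2⟩
      · simp at h1
      · simp at h2
      · simp at h1
    ·
      have hc' : E G _ _ ∨ E G _ _ := hc
      rcases hc' with hE | hE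
      · rcases E_inv hE with ⟨z1, p1, hA, hB⟩ | ⟨u, hA, hB⟩ | ⟨u, hA, hB⟩ | ⟨u, hA, hB⟩ |
          ⟨z1, j, hj, hA, hB⟩ | ⟨u, hA, hB⟩ | ⟨u, hA, hB⟩ | ⟨u, hA, hB⟩ |
          ⟨z1, j, hj, hA, hB⟩ | ⟨u, hA, hB⟩ | ⟨u, hA, hB⟩ | ⟨u, hA, hB⟩ <;>
          subst hB <;>
          simp only [Prod.mk.injEq, Sum.inl.injEq, Sum.inr.injEq, Option.some.injEq,
            reduceCtorEq, and_true, true_and, and_false, false_and] at hA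
        obtain ⟨h3, h4⟩ := hA
        obtain rfl := h3
        obtain rfl := rL_inj G h4
        exact Inv.opening0 t _ hj h
        obtain ⟨h3, h4⟩ := hA
        obtain rfl := rL_inj G h4
        exact Inv.cp2T0 t u h h3.symm
      · rcases E_inv hE with ⟨z1, p1, hA, hB⟩ | ⟨u, hA, hB⟩ | ⟨u, hA, hB⟩ | ⟨u, hA, hB⟩ |
          ⟨z1, j, hj, hA, hB⟩ | ⟨u, hA, hB⟩ | ⟨u, hA, hB⟩ | ⟨u, hA, hB⟩ |
          ⟨z1, j, hj, hA, hB⟩ | ⟨u, hA, hB⟩ | ⟨u, hA, hB⟩ | ⟨u, hA, hB⟩ <;>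
          subst hA <;>
          simp only [Prod.mk.injEq, Sum.inl.injEq, Sum.inr.injEq, Option.some.injEq,
            reduceCtorEq, and_true, true_and, and_false, false_and] at hB
  | opening0 t i hi h =>
    rcases st with ht | hc
    ·
      rcases door_trav_cases ht with ⟨h1, h2⟩ | ⟨h1, h2, h3⟩ | ⟨h1, h2⟩
      · obtain ⟨rfl, rfl⟩ := Prod.ext_iff.1 h2
        erw [stepE9]
        exact Inv.opening1 t (i+1) hi h
      · simp at h2
      · simp at h1
    ·
      have hc' : E G _ _ ∨ E G _ _ := hc
      rcases hc' with hE | hE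
      · rcases E_inv hE with ⟨z1, p1, hA, hB⟩ | ⟨u, hA, hB⟩ | ⟨u, hA, hB⟩ | ⟨u, hA, hB⟩ |
          ⟨z1, j, hj, hA, hB⟩ | ⟨u, hA, hB⟩ | ⟨u, hA, hB⟩ | ⟨u, hA, hB⟩ |
          ⟨z1, j, hj, hA, hB⟩ | ⟨u, hA, hB⟩ | ⟨u, hA, hB⟩ | ⟨u, hA, hB⟩ <;>
          subst hB <;>
          simp only [Prod.mk.injEq, Sum.inl.injEq, Sum.inr.injEq, Option.some.injEq,
            reduceCtorEq, and_true, true_and, and_false, false_and] at hA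
      · rcases E_inv hE with ⟨z1, p1, hA, hB⟩ | ⟨u, hA, hB⟩ | ⟨u, hA, hB⟩ | ⟨u, hA, hB⟩ |
          ⟨z1, j, hj, hA, hB⟩ | ⟨u, hA, hB⟩ | ⟨u, hA, hB⟩ | ⟨u, hA, hB⟩ |
          ⟨z1, j, hj, hA, hB⟩ | ⟨u, hA, hB⟩ | ⟨u, hA, hB⟩ | ⟨u, hA, hB⟩ <;>
          subst hA <;>
          simp only [Prod.mk.injEq, Sum.inl.injEq, Sum.inr.injEq, Option.some.injEq,
            reduceCtorEq, and_true, true_and, and_false, false_and] at hB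
        obtain ⟨h3, h4⟩ := hB
        exact absurd (rL_inj G h4) (by omega)
        obtain ⟨h3, h4⟩ := hB
        obtain rfl := h3
        obtain rfl := Nat.succ_injective (rL_inj G h4)
        exact Inv.opening1 t _ (Nat.lt_of_succ_lt hj) h
  | cp2T0 t t2 h ht2 =>
    rcases st with ht | hc
    ·
      rcases door_trav_cases ht with ⟨h1, h2⟩ | ⟨h1, h2, h3⟩ | ⟨h1, h2⟩
      · simp at h1
      · simp only [S5, mkσ_F_iff, Prod.mk.injEq, and_true] at h1
        obtain rfl := h1
        obtain ⟨rfl, rfl⟩ := Prod.ext_iff.1 h3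
        erw [stepE10]
        exact Inv.cp2T1 _ h
      · simp at h1
    ·
      have hc' : E G _ _ ∨ E G _ _ := hc
      rcases hc' with hE | hE
      · rcases E_inv hE with ⟨z1, p1, hA, hB⟩ | ⟨u, hA, hB⟩ | ⟨u, hA, hB⟩ | ⟨u, hA, hB⟩ |
          ⟨z1, j, hj, hA, hB⟩ | ⟨u, hA, hB⟩ | ⟨u, hA, hB⟩ | ⟨u, hA, hB⟩ |
          ⟨z1, j, hj, hA, hB⟩ | ⟨u, hA, hB⟩ | ⟨u, hA, hB⟩ | ⟨u, hA, hB⟩ <;>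
          subst hB <;>
          simp only [Prod.mk.injEq, Sum.inl.injEq, Sum.inr.injEq, Option.some.injEq,
            reduceCtorEq, and_true, true_and, and_false, false_and] at hA
      · rcases E_inv hE with ⟨z1, p1, hA, hB⟩ | ⟨u, hA, hB⟩ | ⟨u, hA, hB⟩ | ⟨u, hA, hB⟩ |
          ⟨z1, j, hj, hA, hB⟩ | ⟨u, hA, hB⟩ | ⟨u, hA, hB⟩ | ⟨u, hA, hB⟩ |
          ⟨z1, j, hj, hA, hB⟩ | ⟨u, hA, hB⟩ | ⟨u, hA, hB⟩ | ⟨u, hA, hB⟩ <;>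
          subst hA <;>
          simp only [Prod.mk.injEq, Sum.inl.injEq, Sum.inr.injEq, Option.some.injEq,
            reduceCtorEq, and_true, true_and, and_false, false_and] at hB
        obtain rfl := hB
        rw [ht2]
        exact Inv.opening1 t (nG G - 1) (lastlt G) h
  | cp2T1 t h =>
    rcases st with ht | hc
    ·
      rcases door_trav_cases ht with ⟨h1, h2⟩ | ⟨h1, h2, h3⟩ | ⟨h1, h2⟩
      · simp at h1
      · simp at h2
      · simp at h1
    ·
      have hc' : E G _ _ ∨ E G _ _ := hc
      rcases hc' with hE | hE
      · rcases E_inv hE with ⟨z1, p1, hA, hB⟩ | ⟨u, hA, hB⟩ | ⟨u, hA, hB⟩ | ⟨u, hA, hB⟩ |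
          ⟨z1, j, hj, hA, hB⟩ | ⟨u, hA, hB⟩ | ⟨u, hA, hB⟩ | ⟨u, hA, hB⟩ |
          ⟨z1, j, hj, hA, hB⟩ | ⟨u, hA, hB⟩ | ⟨u, hA, hB⟩ | ⟨u, hA, hB⟩ <;>
          subst hB <;>
          simp only [Prod.mk.injEq, Sum.inl.injEq, Sum.inr.injEq, Option.some.injEq,
            reduceCtorEq, and_true, true_and, and_false, false_and] at hA
        obtain rfl := hA
        exact Inv.cp2C0 _ h
      · rcases E_inv hE with ⟨z1, p1, hA, hB⟩ | ⟨u, hA, hB⟩ | ⟨u, hA, hB⟩ | ⟨u, hA, hB⟩ |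
          ⟨z1, j, hj, hA, hB⟩ | ⟨u, hA, hB⟩ | ⟨u, hA, hB⟩ | ⟨u, hA, hB⟩ |
          ⟨z1, j, hj, hA, hB⟩ | ⟨u, hA, hB⟩ | ⟨u, hA, hB⟩ | ⟨u, hA, hB⟩ <;>
          subst hA <;>
          simp only [Prod.mk.injEq, Sum.inl.injEq, Sum.inr.injEq, Option.some.injEq,
            reduceCtorEq, and_true, true_and, and_false, false_and] at hB
  | cp2C0 t h =>
    rcases st with ht | hc
    ·
      rcases door_trav_cases ht with ⟨h1, h2⟩ | ⟨h1, h2, h3⟩ | ⟨h1, h2⟩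
      · simp at h1
      · simp at h2
      · obtain ⟨rfl, rfl⟩ := Prod.ext_iff.1 h2
        erw [stepE11]
        exact Inv.idleF2 t (h.tail (tv_trav t))
    ·
      have hc' : E G _ _ ∨ E G _ _ := hc
      rcases hc' with hE | hE
      · rcases E_inv hE with ⟨z1, p1, hA, hB⟩ | ⟨u, hA, hB⟩ | ⟨u, hA, hB⟩ | ⟨u, hA, hB⟩ |
          ⟨z1, j, hj, hA, hB⟩ | ⟨u, hA, hB⟩ | ⟨u, hA, hB⟩ | ⟨u, hA, hB⟩ |
          ⟨z1, j, hj, hA, hB⟩ | ⟨u, hA, hB⟩ | ⟨u, hA, hB⟩ | ⟨u, hA, hB⟩ <;>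
          subst hB <;>
          simp only [Prod.mk.injEq, Sum.inl.injEq, Sum.inr.injEq, Option.some.injEq,
            reduceCtorEq, and_true, true_and, and_false, false_and] at hA
      · rcases E_inv hE with ⟨z1, p1, hA, hB⟩ | ⟨u, hA, hB⟩ | ⟨u, hA, hB⟩ | ⟨u, hA, hB⟩ |
          ⟨z1, j, hj, hA, hB⟩ | ⟨u, hA, hB⟩ | ⟨u, hA, hB⟩ | ⟨u, hA, hB⟩ |
          ⟨z1, j, hj, hA, hB⟩ | ⟨u, hA, hB⟩ | ⟨u, hA, hB⟩ | ⟨u, hA, hB⟩ <;>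
          subst hA <;>
          simp only [Prod.mk.injEq, Sum.inl.injEq, Sum.inr.injEq, Option.some.injEq,
            reduceCtorEq, and_true, true_and, and_false, false_and] at hB
        obtain rfl := hB
        exact Inv.cp2T1 _ h


open DoorLoc
variable {G : Gadget}

lemma mkMove {σ : Idx G → Bool} {x y : Idx G × DoorLoc} (hE : E G x y) :
    SysStep _ (Sys G) (σ, x) (σ, y) :=
  SysStep.move (Or.inl hE)

lemma mkStepT {σ : Idx G → Bool} {i : Idx G} (h : σ i = true) {σ' : Idx G → Bool}
    (hσ' : updState σ i true = σ') :
    SysStep _ (Sys G) (σ, (i, T0)) (σ', (i, T1)) := by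
  subst hσ'
  exact SysStep.trav (show doorTrav true true true (σ i, T0) (true, T1) from
    Or.inr (Or.inr (Or.inl ⟨h, rfl, rfl⟩)))

lemma mkStepO {σ : Idx G → Bool} {i : Idx G} {σ' : Idx G → Bool}
    (hσ' : updState σ i true = σ') :
    SysStep _ (Sys G) (σ, (i, O0)) (σ', (i, O1)) := by
  subst hσ'
  exact SysStep.trav (show doorTrav true true true (σ i, O0) (true, O1) from
    Or.inl ⟨rfl, rfl⟩)

lemma mkStepC {σ : Idx G → Bool} {i : Idx G} {σ' : Idx G → Bool}
    (hσ' : updState σ i false = σ') :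
    SysStep _ (Sys G) (σ, (i, C0)) (σ', (i, C1)) := by
  subst hσ'
  exact SysStep.trav (show doorTrav true true true (σ i, C0) (false, C1) from
    Or.inr (Or.inr (Or.inr (Or.inr (Or.inl ⟨rfl, rfl⟩)))))

lemma walk_close (t : Tv G) : ∀ (i : ℕ) (hi : i < nG G),
    Relation.ReflTransGen (SysStep _ (Sys G))
      (S2e G t, (ιV G (srcS t, rL G 0 (hn G)), C0))
      (S3 G t i, (ιV G (srcS t, rL G i hi), C1)) := by
  intro i
  induction i with
  | zero => exact fun hi => Relation.ReflTransGen.single (mkStepC (stepE4 t))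
  | succ i ih =>
    intro hi
    exact (((ih (Nat.lt_of_succ_lt hi)).tail
      (mkMove (E.e5 (srcS t) i hi))).tail (mkStepC (stepE5 t i hi)))

lemma walk_open (t : Tv G) : ∀ (i : ℕ) (hi : i < nG G),
    Relation.ReflTransGen (SysStep _ (Sys G))
      (S5pre G t, (ιV G (tgtS t, rL G 0 (hn G)), O0))
      (S5 G t i, (ιV G (tgtS t, rL G i hi), O1)) := by
  intro i
  induction i with
  | zero => exact fun hi => Relation.ReflTransGen.single (mkStepO (stepE8 t))
  | succ i ih =>
    intro hi
    exact (((ih (Nat.lt_of_succ_lt hi)).tail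
      (mkMove (E.e9 (tgtS t) i hi))).tail (mkStepO (stepE9 t i hi)))

lemma walk_tv (t : Tv G) :
    Relation.ReflTransGen (SysStep _ (Sys G))
      (enc G (srcS t), (ιL G (some (srcL t)), T0))
      (enc G (tgtS t), (ιL G (some (tgtL t)), T0)) := by
  have w1 : Relation.ReflTransGen (SysStep _ (Sys G))
      (enc G (srcS t), (ιL G (some (srcL t)), T0))
      (S2e G t, (ιV G (srcS t, rL G 0 (hn G)), C0)) :=
    ((((((Relation.ReflTransGen.single
      (mkMove (E.e1 (srcS t) (srcL t)))).tail
      (mkStepT (by simp [enc]) (stepE1 (srcS t) (some (srcL t))))).tail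
      (mkMove (E.e2 t))).tail
      (mkStepO (stepE2 t))).tail
      (mkMove (E.e3 t))).tail
      (mkStepO (stepE3 t))).tail
      (mkMove (E.e4 t))
  have w2 := walk_close t (nG G - 1) (lastlt G)
  have w3 : Relation.ReflTransGen (SysStep _ (Sys G))
      (S3 G t (nG G - 1), (ιV G (srcS t, rL G (nG G - 1) (lastlt G)), C1))
      (S5pre G t, (ιV G (tgtS t, rL G 0 (hn G)), O0)) :=
    ((((Relation.ReflTransGen.single
      (mkMove (E.e6 t))).tail
      (mkStepT (by simp [S3]) (stepE6 t (nG G - 1)))).tail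
      (mkMove (E.e7 t))).tail
      (mkStepC (stepE7 t))).tail
      (mkMove (E.e8 t))
  have w4 := walk_open t (nG G - 1) (lastlt G)
  have w5 : Relation.ReflTransGen (SysStep _ (Sys G))
      (S5 G t (nG G - 1), (ιV G (tgtS t, rL G (nG G - 1) (lastlt G)), O1))
      (enc G (tgtS t), (ιL G (some (tgtL t)), T0)) :=
    ((((Relation.ReflTransGen.single
      (mkMove (E.e10 t))).tail
      (mkStepT (by simp [S5]) (stepE10 t (nG G - 1)))).tail
      (mkMove (E.e11 t))).tail
      (mkStepC (stepE11 t))).tail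
      (mkMove (E.e12 t))
  exact (((w1.trans w2).trans w3).trans w4).trans w5

lemma sim_complete {s : G.State} {a : G.Loc} :
    ∀ {x : G.State × G.Loc}, Relation.ReflTransGen G.trav (s, a) x →
    Relation.ReflTransGen (SysStep _ (Sys G))
      (enc G s, (ιL G (some a), T0)) (enc G x.1, (ιL G (some x.2), T0)) := by
  intro x h
  induction h with
  | refl => exact .refl
  | @tail x y h1 h2 ih => exact ih.trans (walk_tv ⟨(x, y), h2⟩)

lemma inv_chr {s : G.State} {a : G.Loc} {c} (h : Inv s a c) :
    ∀ {s' : G.State} {b : G.Loc}, c = (enc G s', (ιL G (some b), T0)) →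
    Relation.ReflTransGen G.trav (s, a) (s', b) := by
  cases h <;> intro s' b hc <;>
    simp only [Prod.mk.injEq, Sum.inl.injEq, Sum.inr.injEq, Option.some.injEq,
      reduceCtorEq, and_true, true_and, and_false, false_and] at hc
  obtain ⟨h1, rfl⟩ := hc
  obtain rfl := enc_inj G h1
  assumption

end DoorUniv

/-- The open-required directed door can simulate any gadget. -/
theorem directed_door_is_universal (G : Gadget) :
    Simulates (doorGadget true true true) G := by
  classical
  refine ⟨DoorUniv.Sys G, fun p => (DoorUniv.ιL G (some p), DoorLoc.T0), DoorUniv.enc G,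
    ?_, DoorUniv.enc_inj G, ?_⟩
  · intro p q h
    exact Option.some.inj (Sum.inl.inj (congrArg Prod.fst h))
  · intro s s' a b
    constructor
    · intro h
      have key : ∀ c, Relation.ReflTransGen (SysStep _ (DoorUniv.Sys G))
          (DoorUniv.enc G s, (DoorUniv.ιL G (some a), DoorLoc.T0)) c →
          DoorUniv.Inv s a c := by
        intro c hc
        induction hc with
        | refl => exact DoorUniv.Inv.idleExt .refl
        | tail h1 h2 ih => exact DoorUniv.inv_step ih h2
      exact DoorUniv.inv_chr (key _ h) rfl
    · intro h
      exact DoorUniv.sim_complete h
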